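/- Let K be a nonempty closed convex cone in X. Then (K^⊖)^⊥ = K ∩ (−K), where (K^⊖)^⊥ is the orthogonal complement of the polar cone of K. -/

import Mathlib

open Filter Topology

variable {X : Type*} [NormedAddCommGroup X] [InnerProductSpace ℝ X] [FiniteDimensional ℝ X]

/-- The polar cone `S^⊖ = {x : ⟪x, s⟫ ≤ 0 for all s ∈ S}`. -/
def polarCone (S : Set X) : Set X := {x : X | ∀ s ∈ S, (inner ℝ x s : ℝ) ≤ 0}

/-- The orthogonal complement `S^⊥ = {x : ⟪x, s⟫ = 0 for all s ∈ S}` of a set. -/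
def perpSet (S : Set X) : Set X := {x : X | ∀ s ∈ S, (inner ℝ x s : ℝ) = 0}

/-- For a nonempty closed convex cone `K`, `(K^⊖)^⊥ = K ∩ (−K)`. -/
theorem stmt1 (K : Set X) (hne : K.Nonempty) (hcl : IsClosed K) (hconv : Convex ℝ K)
    (hcone : ∀ t : ℝ, 0 ≤ t → ∀ x ∈ K, t • x ∈ K) :
    perpSet (polarCone K) = K ∩ (-K) := by
  let C : ConvexCone ℝ X :=
    { carrier := K
      smul_mem' := fun {c} hc {x} hx => hcone c hc.le x hx
      add_mem' := fun {x} hx {y} hy => by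
        have hmid : (1/2 : ℝ) • x + (1/2 : ℝ) • y ∈ K :=
          hconv hx hy (by norm_num) (by norm_num) (by norm_num)
        have h2 := hcone 2 (by norm_num) _ hmid
        have : (2:ℝ) • ((1/2 : ℝ) • x + (1/2 : ℝ) • y) = x + y := by
          rw [smul_add, smul_smul, smul_smul]; norm_num
        rwa [this] at h2 }
  have bipS : ((ProperCone.innerDual (ProperCone.innerDual K : Set X)) : Set X) = K := by
    let P : ProperCone ℝ X :=
      { carrier := K
        add_mem' := fun {x y} hx hy => C.add_mem hx hy
        zero_mem' := by obtain ⟨x, hx⟩ := hne; simpa using hcone 0 le_rfl x hx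
        smul_mem' := fun c x hx => by simpa [NNReal.smul_def] using hcone c c.2 x hx
        isClosed' := hcl }
    exact congrArg SetLike.coe (ProperCone.innerDual_innerDual P)
  ext x
  constructor
  · intro hx
    have key : ∀ d ∈ (ProperCone.innerDual K : Set X), (inner ℝ x d : ℝ) = 0 := by
      intro d hd
      have hmem : -d ∈ polarCone K := by
        intro s hs
        have h1 : (0:ℝ) ≤ inner ℝ s d := hd hs
        rw [inner_neg_left, real_inner_comm]
        linarith
      have := hx (-d) hmem
      rwa [inner_neg_right, neg_eq_zero] at this
    constructor
    · rw [← bipS]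
      intro d hd
      change (0:ℝ) ≤ inner ℝ d x
      rw [real_inner_comm, key d hd]
    · rw [Set.mem_neg, ← bipS]
      intro d hd
      change (0:ℝ) ≤ inner ℝ d (-x)
      rw [inner_neg_right, real_inner_comm, key d hd, neg_zero]
  · rintro ⟨hxK, hxnK⟩ s hs
    rw [Set.mem_neg] at hxnK
    have h1 : (inner ℝ s x : ℝ) ≤ 0 := hs x hxK
    have h2 : (inner ℝ s (-x) : ℝ) ≤ 0 := hs (-x) hxnK
    rw [inner_neg_right] at h2
    rw [real_inner_comm]
    linarith
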